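/- Let ρ be a subnormalized density matrix and M₁,…,M_m positive operators with M_u ≤ 1, and suppose that for each u, Tr[M_u² ρ] ≥ 1 − ε for some 0 < ε ≤ 1. Then Tr[M_m² M_{m−1}⋯M₁ ρ M₁⋯M_{m−1}] ≥ 1 − ε − 2m√ε. -/

import Mathlib

open Matrix ComplexOrder BigOperators Finset

/-- The square root of a positive semidefinite matrix, as `Matrix.PosSemidef.sqrt` was defined
in the older Mathlib (removed since). -/
noncomputable def Matrix.PosSemidef.sqrt {n : Type*} [Fintype n] [DecidableEq n]
    {A : Matrix n n ℂ} (hA : A.PosSemidef) : Matrix n n ℂ :=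
  hA.1.eigenvectorUnitary.1 * diagonal ((↑) ∘ (√·) ∘ hA.1.eigenvalues) *
    (star hA.1.eigenvectorUnitary : Matrix n n ℂ)

noncomputable def traceNorm {d : Type*} [Fintype d] [DecidableEq d] (A : Matrix d d ℂ) : ℝ :=
  ((Matrix.posSemidef_conjTranspose_mul_self A).sqrt.trace).re

noncomputable def traceDist {d : Type*} [Fintype d] [DecidableEq d] (A B : Matrix d d ℂ) : ℝ :=
  traceNorm (A - B) / 2

section Aux
set_option linter.unusedSectionVars false
set_option linter.unusedVariables false

set_option maxHeartbeats 1000000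

variable {d : Type*} [Fintype d] [DecidableEq d]

lemma Matrix.PosSemidef.sqrt_mul_self {A : Matrix d d ℂ} (hA : A.PosSemidef) :
    hA.sqrt * hA.sqrt = A := by
  have hU : (star hA.1.eigenvectorUnitary : Matrix d d ℂ) * hA.1.eigenvectorUnitary.1 = 1 :=
    Unitary.coe_star_mul_self _
  have hD : diagonal ((↑) ∘ (√·) ∘ hA.1.eigenvalues) *
      diagonal ((↑) ∘ (√·) ∘ hA.1.eigenvalues) =
      diagonal (((↑) : ℝ → ℂ) ∘ hA.1.eigenvalues) := by
    rw [diagonal_mul_diagonal]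
    congr 1; funext i
    simp only [Function.comp_apply]
    rw [← Complex.ofReal_mul, Real.mul_self_sqrt (hA.eigenvalues_nonneg i)]
  conv_rhs => rw [hA.1.spectral_theorem]
  rw [Unitary.conjStarAlgAut_apply]
  unfold Matrix.PosSemidef.sqrt
  calc _ = hA.1.eigenvectorUnitary.1 * diagonal ((↑) ∘ (√·) ∘ hA.1.eigenvalues) *
        ((star hA.1.eigenvectorUnitary : Matrix d d ℂ) * hA.1.eigenvectorUnitary.1) *
        diagonal ((↑) ∘ (√·) ∘ hA.1.eigenvalues) *
        (star hA.1.eigenvectorUnitary : Matrix d d ℂ) := by simp only [Matrix.mul_assoc]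
    _ = _ := by rw [hU, Matrix.mul_one, Matrix.mul_assoc _ (diagonal _) (diagonal _), hD]; rfl

lemma Matrix.PosSemidef.posSemidef_sqrt {A : Matrix d d ℂ} (hA : A.PosSemidef) :
    hA.sqrt.PosSemidef := by
  have hD : (diagonal (((↑) : ℝ → ℂ) ∘ (√·) ∘ hA.1.eigenvalues)).PosSemidef := by
    rw [posSemidef_diagonal_iff]
    intro i
    exact Complex.zero_le_real.mpr (Real.sqrt_nonneg _)
  have := hD.mul_mul_conjTranspose_same (hA.1.eigenvectorUnitary.1)
  unfold Matrix.PosSemidef.sqrt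
  rwa [Matrix.star_eq_conjTranspose]

noncomputable def emb (X : Matrix d d ℂ) : EuclideanSpace ℂ (d × d) :=
  WithLp.toLp 2 (fun p : d × d => X p.1 p.2)

lemma emb_add (X Y : Matrix d d ℂ) : emb (X + Y) = emb X + emb Y :=
  PiLp.ext fun p => by simp [emb]

lemma emb_neg (X : Matrix d d ℂ) : emb (-X) = - emb X :=
  PiLp.ext fun p => by simp [emb]

lemma emb_inner (X Y : Matrix d d ℂ) : (inner ℂ (emb X) (emb Y) : ℂ) = (Xᴴ * Y).trace := by
  simp [emb, PiLp.inner_apply, Matrix.trace, Matrix.diag, Matrix.mul_apply,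
    Matrix.conjTranspose_apply, RCLike.inner_apply, Fintype.sum_prod_type]
  rw [Finset.sum_comm]
  exact Finset.sum_congr rfl fun _ _ => Finset.sum_congr rfl fun _ _ => mul_comm _ _

lemma emb_norm_sq (X : Matrix d d ℂ) : ‖emb X‖ ^ 2 = ((Xᴴ * X).trace).re := by
  rw [@norm_sq_eq_re_inner ℂ, emb_inner]; rfl

lemma psd_trace_re_nonneg {S : Matrix d d ℂ} (hS : S.PosSemidef) : 0 ≤ S.trace.re := by
  have hd : ∀ i, 0 ≤ (S i i).re := by
    intro i
    have h := hS.diag_nonneg (i := i)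
    rw [Complex.le_def] at h
    simpa using h.1
  rw [Matrix.trace, Complex.re_sum]
  exact Finset.sum_nonneg fun i _ => hd i

lemma trace_mul_psd_nonneg {S ρ : Matrix d d ℂ} (hS : S.PosSemidef) (hρ : ρ.PosSemidef) :
    0 ≤ ((S * ρ).trace).re := by
  have h1 : (hρ.sqrt * S * hρ.sqrt).trace = (S * ρ).trace := by
    rw [Matrix.trace_mul_cycle, hρ.sqrt_mul_self, Matrix.trace_mul_comm]
  rw [← h1]
  refine psd_trace_re_nonneg ?_
  have h2 := hS.mul_mul_conjTranspose_same hρ.sqrt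
  rwa [hρ.posSemidef_sqrt.isHermitian.eq] at h2

-- M - M*M is PSD when 0 ≤ M ≤ 1
lemma sub_sq_psd {N : Matrix d d ℂ} (hN : N.PosSemidef)
    (hN1 : ((1 : Matrix d d ℂ) - N).PosSemidef) : (N - N * N).PosSemidef := by
  have h2 := hN1.mul_mul_conjTranspose_same hN.sqrt
  rw [hN.posSemidef_sqrt.isHermitian.eq] at h2
  obtain ⟨s, hs1, hss⟩ : ∃ s : Matrix d d ℂ, hN.sqrt = s ∧ s * s = N :=
    ⟨hN.sqrt, rfl, hN.sqrt_mul_self⟩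
  rw [hs1] at h2
  have e1 : s * ((1 : Matrix d d ℂ) - N) * s = N - N * N := by
    rw [← hss]; noncomm_ring
  rwa [e1] at h2

lemma one_sub_sq_psd {N : Matrix d d ℂ} (hN : N.PosSemidef)
    (hN1 : ((1 : Matrix d d ℂ) - N).PosSemidef) :
    ((1 : Matrix d d ℂ) - N * N).PosSemidef := by
  have : (1 : Matrix d d ℂ) - N * N = (1 - N) + (N - N * N) := (sub_add_sub_cancel _ _ _).symm
  rw [this]
  exact hN1.add (sub_sq_psd hN hN1)

lemma contr_mul {C N : Matrix d d ℂ} (hC : ((1 : Matrix d d ℂ) - Cᴴ * C).PosSemidef)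
    (hN : ((1 : Matrix d d ℂ) - Nᴴ * N).PosSemidef) :
    ((1 : Matrix d d ℂ) - (C * N)ᴴ * (C * N)).PosSemidef := by
  have h2 := hC.conjTranspose_mul_mul_same N
  have e1 : (1 : Matrix d d ℂ) - (C * N)ᴴ * (C * N) =
      (1 - Nᴴ * N) + Nᴴ * (1 - Cᴴ * C) * N := by
    rw [Matrix.conjTranspose_mul]; noncomm_ring
  rw [e1]
  exact hN.add h2

lemma emb_contraction {C : Matrix d d ℂ} (hC : ((1 : Matrix d d ℂ) - Cᴴ * C).PosSemidef)
    (X : Matrix d d ℂ) : ‖emb (C * X)‖ ≤ ‖emb X‖ := by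
  have h1 : ‖emb (C * X)‖ ^ 2 ≤ ‖emb X‖ ^ 2 := by
    rw [emb_norm_sq, emb_norm_sq]
    have h2 := psd_trace_re_nonneg (hC.conjTranspose_mul_mul_same X)
    have e1 : Xᴴ * ((1 : Matrix d d ℂ) - Cᴴ * C) * X = Xᴴ * X - (C * X)ᴴ * (C * X) := by
      rw [Matrix.conjTranspose_mul]; noncomm_ring
    rw [e1, Matrix.trace_sub, Complex.sub_re] at h2
    linarith
  have := norm_nonneg (emb (C * X)); have := norm_nonneg (emb X)
  nlinarith

lemma list_contr (l : List (Matrix d d ℂ))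
    (hl : ∀ N ∈ l, ((1 : Matrix d d ℂ) - Nᴴ * N).PosSemidef) :
    ((1 : Matrix d d ℂ) - (l.reverse.prod)ᴴ * l.reverse.prod).PosSemidef := by
  induction l with
  | nil => simp [Matrix.PosSemidef.zero]
  | cons N l ih =>
    have e1 : (N :: l).reverse.prod = l.reverse.prod * N := by
      simp
    rw [e1]
    exact contr_mul (ih fun K hK => hl K (List.mem_cons_of_mem _ hK))
      (hl N (List.mem_cons_self))

lemma chain_bound (R : Matrix d d ℂ) (s : ℝ) (hs : 0 ≤ s) (l : List (Matrix d d ℂ))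
    (hl : ∀ N ∈ l, ((1 : Matrix d d ℂ) - Nᴴ * N).PosSemidef ∧
      ‖emb (((1 : Matrix d d ℂ) - N) * R)‖ ≤ s) :
    ‖emb ((l.reverse.prod - 1) * R)‖ ≤ l.length * s := by
  induction l with
  | nil =>
    rw [show ((List.nil : List (Matrix d d ℂ)).reverse.prod - 1) * R = 0 by simp,
      show emb (0 : Matrix d d ℂ) = 0 from PiLp.ext fun p => by simp [emb]]
    simp
  | cons N l ih =>
    have e1 : (N :: l).reverse.prod = l.reverse.prod * N := by simp
    have e2 : ((N :: l).reverse.prod - 1) * R =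
        l.reverse.prod * (-(((1 : Matrix d d ℂ) - N) * R)) + (l.reverse.prod - 1) * R := by
      rw [e1]; noncomm_ring
    rw [e2, emb_add]
    calc ‖emb (l.reverse.prod * (-(((1 : Matrix d d ℂ) - N) * R))) +
          emb ((l.reverse.prod - 1) * R)‖
        ≤ ‖emb (l.reverse.prod * (-(((1 : Matrix d d ℂ) - N) * R)))‖ +
          ‖emb ((l.reverse.prod - 1) * R)‖ := norm_add_le _ _
      _ ≤ s + l.length * s := by
          refine add_le_add ?_ (ih fun K hK => hl K (List.mem_cons_of_mem _ hK))
          refine le_trans (emb_contraction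
            (list_contr l fun K hK => (hl K (List.mem_cons_of_mem _ hK)).1) _) ?_
          rw [emb_neg, norm_neg]
          exact (hl N (List.mem_cons_self)).2
      _ ≤ (N :: l).length * s := by
          simp only [List.length_cons]
          push_cast
          nlinarith

lemma trace_conj_sqrt {ρ : Matrix d d ℂ} (hρ : ρ.PosSemidef) (C : Matrix d d ℂ) :
    ((C * hρ.sqrt)ᴴ * (C * hρ.sqrt)).trace = (Cᴴ * C * ρ).trace := by
  rw [Matrix.conjTranspose_mul, hρ.posSemidef_sqrt.isHermitian.eq, Matrix.trace_mul_comm,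
    Matrix.mul_assoc, ← Matrix.mul_assoc hρ.sqrt hρ.sqrt, hρ.sqrt_mul_self,
    Matrix.trace_mul_comm, Matrix.mul_assoc, Matrix.trace_mul_comm]

lemma step_bound {ρ N : Matrix d d ℂ} (hρ : ρ.PosSemidef) (hρtr : ρ.trace.re ≤ 1)
    (hN : N.PosSemidef) (hN1 : ((1 : Matrix d d ℂ) - N).PosSemidef) {ε : ℝ}
    (h : 1 - ε ≤ ((N * N * ρ).trace).re) :
    ‖emb (((1 : Matrix d d ℂ) - N) * hρ.sqrt)‖ ^ 2 ≤ ε := by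
  rw [emb_norm_sq, trace_conj_sqrt]
  have e : ((1 : Matrix d d ℂ) - N)ᴴ * ((1 : Matrix d d ℂ) - N) * ρ =
      ρ - N * ρ - N * ρ + N * N * ρ := by
    rw [hN1.isHermitian.eq]; noncomm_ring
  have h1 : 0 ≤ ((N * ρ).trace).re - ((N * N * ρ).trace).re := by
    have h2 := trace_mul_psd_nonneg (sub_sq_psd hN hN1) hρ
    rw [Matrix.sub_mul, Matrix.trace_sub, Complex.sub_re] at h2
    exact h2
  rw [e, Matrix.trace_add, Matrix.trace_sub, Matrix.trace_sub, Complex.add_re,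
    Complex.sub_re, Complex.sub_re]
  linarith

theorem bisection_chain_success' {d : Type*} [Fintype d] [DecidableEq d]
    (ρ : Matrix d d ℂ) (hρ : ρ.PosSemidef) (hρtr : (ρ.trace).re ≤ 1)
    (m : ℕ) (M : Fin (m + 1) → Matrix d d ℂ)
    (hM : ∀ u, (M u).PosSemidef) (hM1 : ∀ u, ((1 : Matrix d d ℂ) - M u).PosSemidef)
    (ε : ℝ) (hε : 0 < ε) (hε1 : ε ≤ 1)
    (h : ∀ u, ((M u * M u * ρ).trace).re ≥ 1 - ε) :
    ((M (Fin.last m) * M (Fin.last m) *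
        ((List.ofFn fun i : Fin m => M i.castSucc).reverse.prod * ρ *
          (List.ofFn fun i : Fin m => M i.castSucc).prod)).trace).re ≥
      1 - ε - 2 * (m + 1) * Real.sqrt ε := by
  set A := M (Fin.last m) with hAdef
  set L := List.ofFn (fun i : Fin m => M i.castSucc) with hLdef
  set P := L.reverse.prod with hPdef
  set R := hρ.sqrt with hRdef
  have hmem : ∀ N ∈ L, ∃ u, N = M u := by
    intro N hN
    rw [hLdef, List.mem_ofFn] at hN
    obtain ⟨i, hi⟩ := hN
    exact ⟨i.castSucc, hi.symm⟩
  -- L.prod = Pᴴ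
  have hherm : ∀ N ∈ L, Nᴴ = N := by
    intro N hN; obtain ⟨u, rfl⟩ := hmem N hN; exact (hM u).isHermitian.eq
  have hmapid : L.map conjTranspose = L := by
    conv_rhs => rw [← List.map_id L]
    exact List.map_congr_left hherm
  have hPH : Pᴴ = L.prod := by
    rw [hPdef, Matrix.conjTranspose_list_prod]
    simp only [List.map_reverse, List.reverse_reverse, hmapid]
  -- contraction properties
  have Hcontr : ∀ N ∈ L, ((1 : Matrix d d ℂ) - Nᴴ * N).PosSemidef := by
    intro N hN; obtain ⟨u, rfl⟩ := hmem N hN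
    rw [(hM u).isHermitian.eq]
    exact one_sub_sq_psd (hM u) (hM1 u)
  have Hstep : ∀ N ∈ L, ‖emb (((1 : Matrix d d ℂ) - N) * R)‖ ≤ Real.sqrt ε := by
    intro N hN; obtain ⟨u, rfl⟩ := hmem N hN
    have h1 := step_bound hρ hρtr (hM u) (hM1 u) (h u)
    calc ‖emb (((1 : Matrix d d ℂ) - M u) * R)‖
        = Real.sqrt (‖emb (((1 : Matrix d d ℂ) - M u) * R)‖ ^ 2) :=
          (Real.sqrt_sq (norm_nonneg _)).symm
      _ ≤ Real.sqrt ε := Real.sqrt_le_sqrt h1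
  have Hchain : ‖emb ((P - 1) * R)‖ ≤ (m : ℝ) * Real.sqrt ε := by
    have := chain_bound R (Real.sqrt ε) (Real.sqrt_nonneg ε) L
      (fun N hN => ⟨Hcontr N hN, Hstep N hN⟩)
    simpa [hLdef] using this
  have hA := hM (Fin.last m)
  have hA1 := hM1 (Fin.last m)
  have hA2 : ((1 : Matrix d d ℂ) - Aᴴ * A).PosSemidef := by
    rw [hA.isHermitian.eq]; exact one_sub_sq_psd hA hA1
  set b := ‖emb (A * R)‖ with hbdef
  set a := ‖emb (A * (P * R))‖ with hadef
  -- b² = Tr[A A ρ]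
  have hb2 : b ^ 2 = ((A * A * ρ).trace).re := by
    rw [hbdef, emb_norm_sq, trace_conj_sqrt, hA.isHermitian.eq]
  have hb2' : 1 - ε ≤ b ^ 2 := by rw [hb2]; exact h (Fin.last m)
  have hb1 : b ≤ 1 := by
    have h3 := trace_mul_psd_nonneg (one_sub_sq_psd hA hA1) hρ
    rw [Matrix.sub_mul, Matrix.one_mul, Matrix.trace_sub, Complex.sub_re] at h3
    nlinarith [norm_nonneg (emb (A * R))]
  -- a² = goal trace
  have ha2 : a ^ 2 = ((A * A * (P * ρ * L.prod)).trace).re := by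
    rw [hadef, ← hPH, show A * (P * R) = A * P * R from (Matrix.mul_assoc A P R).symm,
      emb_norm_sq, trace_conj_sqrt, Matrix.conjTranspose_mul, hA.isHermitian.eq]
    congr 1
    simp only [Matrix.mul_assoc]
    rw [Matrix.trace_mul_comm]
    simp only [Matrix.mul_assoc]
    rfl
  -- triangle inequality
  have htri : b - (m : ℝ) * Real.sqrt ε ≤ a := by
    have e3 : A * R = A * (P * R) + -(A * ((P - 1) * R)) := by noncomm_ring
    have h4 : b ≤ a + ‖emb (A * ((P - 1) * R))‖ := by
      rw [hbdef, e3, emb_add, emb_neg]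
      exact le_trans (norm_add_le _ _) (by rw [norm_neg])
    have h5 : ‖emb (A * ((P - 1) * R))‖ ≤ ‖emb ((P - 1) * R)‖ := emb_contraction hA2 _
    linarith
  -- scalar endgame
  rw [ge_iff_le, ← ha2]
  have hbnn : (0 : ℝ) ≤ b := norm_nonneg _
  have hann : (0 : ℝ) ≤ a := norm_nonneg _
  have hs : (0 : ℝ) ≤ Real.sqrt ε := Real.sqrt_nonneg ε
  rcases le_or_gt b ((m : ℝ) * Real.sqrt ε) with hcase | hcase
  · nlinarith [sq_nonneg a]
  · have h6 : 0 ≤ b - (m : ℝ) * Real.sqrt ε := le_of_lt (by linarith)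
    have h7 : (b - (m : ℝ) * Real.sqrt ε) ^ 2 ≤ a ^ 2 := by nlinarith
    have h8 : 0 ≤ (1 - b) * ((m : ℝ) * Real.sqrt ε) :=
      mul_nonneg (by linarith) (mul_nonneg (Nat.cast_nonneg m) hs)
    nlinarith [sq_nonneg ((m : ℝ) * Real.sqrt ε)]

end Aux

/-- If each measurement succeeds with probability at least 1 − ε on ρ, then the
whole chain of m+1 measurements succeeds with probability at least 1 − ε − 2(m+1)√ε. -/
theorem bisection_chain_success {d : Type*} [Fintype d] [DecidableEq d]
    (ρ : Matrix d d ℂ) (hρ : ρ.PosSemidef) (hρtr : (ρ.trace).re ≤ 1)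
    (m : ℕ) (M : Fin (m + 1) → Matrix d d ℂ)
    (hM : ∀ u, (M u).PosSemidef) (hM1 : ∀ u, ((1 : Matrix d d ℂ) - M u).PosSemidef)
    (ε : ℝ) (hε : 0 < ε) (hε1 : ε ≤ 1)
    (h : ∀ u, ((M u * M u * ρ).trace).re ≥ 1 - ε) :
    ((M (Fin.last m) * M (Fin.last m) *
        ((List.ofFn fun i : Fin m => M i.castSucc).reverse.prod * ρ *
          (List.ofFn fun i : Fin m => M i.castSucc).prod)).trace).re ≥
      1 - ε - 2 * (m + 1) * Real.sqrt ε :=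
  bisection_chain_success' ρ hρ hρtr m M hM hM1 ε hε hε1 h
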